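/- arXiv:1609.05661 — 6 statements merged into one kernel-verified Lean document; each statement's English description precedes it below -/
import Mathlib

section
/- Let f_1, …, f_n be gambles on a finite nonempty set Ω and let M̂ = {p : Ω → ℝ : ⟨p, f_i⟩ ≥ 0 for all i = 1, …, n}. Then the set D = {g : Ω → ℝ : ⟨p, g⟩ ≥ 0 for every p ∈ M̂} equals the positive hull {Σ_{i=1}^n α_i f_i : α_i ≥ 0 for all i} of the gambles f_1, …, f_n. -/
open scoped BigOperators

/-- Inner product of gambles: `⟨f,g⟩ = ∑ x, f x * g x`. -/
noncomputable def ip {Ω : Type*} [Fintype Ω] (f g : Ω → ℝ) : ℝ := ∑ x, f x * g x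

section Aux

variable {V : Type*} [AddCommGroup V] [Module ℝ V]

/-- Carathéodory for cones: any nonnegative combination can be rewritten as a nonnegative
combination over a linearly independent subfamily. -/
lemma cone_caratheodory {n : ℕ} (f : Fin n → V) (s : Finset (Fin n)) :
    ∀ (α : Fin n → ℝ), (∀ i, 0 ≤ α i) →
      ∃ (t : Finset (Fin n)) (β : Fin n → ℝ), (∀ i, 0 ≤ β i) ∧
        LinearIndependent ℝ (fun i : t => f i) ∧
        ∑ i ∈ t, β i • f i = ∑ i ∈ s, α i • f i := by
  induction s using Finset.strongInduction with
  | _ s ih =>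
    intro α hα
    by_cases hli : LinearIndependent ℝ (fun i : s => f i)
    · exact ⟨s, α, hα, hli, rfl⟩
    obtain ⟨c, hc0, j, hcj⟩ := Fintype.not_linearIndependent_iff.mp hli
    classical
    -- extend `c` to `Fin n`, possibly negated so that some coefficient is positive
    have hext : ∀ (d : Fin n → ℝ), (∀ i : s, d i = c i ∨ ∀ i : s, d i = -c i) → True := fun _ _ => trivial
    obtain ⟨e, hes, hesum, i₁, hi₁s, hi₁pos⟩ :
        ∃ e : Fin n → ℝ, (∀ i, i ∉ s → e i = 0) ∧ (∑ i ∈ s, e i • f i = 0) ∧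
          ∃ i₁, i₁ ∈ s ∧ 0 < e i₁ := by
      set d : Fin n → ℝ := fun i => if h : i ∈ s then c ⟨i, h⟩ else 0 with hd
      have hdsum : ∑ i ∈ s, d i • f i = 0 := by
        rw [← Finset.sum_coe_sort s (fun i => d i • f i)]
        rw [← hc0]
        refine Finset.sum_congr rfl fun i _ => ?_
        simp [hd, i.2]
      have hdj : d (j : Fin n) ≠ 0 := by simpa [hd, j.2] using hcj
      rcases lt_or_gt_of_ne hdj with hneg | hpos
      · refine ⟨fun i => -d i, fun i hi => by simp [hd, hi], ?_, j, j.2, by simpa using neg_pos.mpr hneg⟩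
        have : ∑ i ∈ s, (-d i) • f i = -∑ i ∈ s, d i • f i := by
          simp [neg_smul, Finset.sum_neg_distrib]
        rw [this, hdsum, neg_zero]
      · exact ⟨d, fun i hi => by simp [hd, hi], hdsum, j, j.2, hpos⟩
    -- minimize the ratio over positive coefficients
    set T : Finset (Fin n) := s.filter (fun i => 0 < e i) with hT
    have hTne : T.Nonempty := ⟨i₁, by simp [hT, hi₁s, hi₁pos]⟩
    obtain ⟨i₀, hi₀T, hi₀min⟩ := T.exists_min_image (fun i => α i / e i) hTne
    have hi₀s : i₀ ∈ s := (Finset.mem_filter.mp hi₀T).1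
    have hi₀pos : 0 < e i₀ := (Finset.mem_filter.mp hi₀T).2
    set m : ℝ := α i₀ / e i₀ with hm
    have hm0 : 0 ≤ m := div_nonneg (hα i₀) hi₀pos.le
    set β : Fin n → ℝ := fun i => α i - m * e i with hβ
    have hβ0 : ∀ i, 0 ≤ β i := by
      intro i
      rcases le_or_gt (e i) 0 with h | h
      · have : m * e i ≤ 0 := mul_nonpos_of_nonneg_of_nonpos hm0 h
        simp only [hβ]; linarith [hα i]
      · have his : i ∈ s := by
          by_contra hns; exact absurd (hes i hns) (ne_of_gt h)
        have hiT : i ∈ T := Finset.mem_filter.mpr ⟨his, h⟩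
        have := hi₀min i hiT
        have : m * e i ≤ α i := by
          rw [hm]
          calc α i₀ / e i₀ * e i ≤ α i / e i * e i :=
                mul_le_mul_of_nonneg_right this h.le
            _ = α i := div_mul_cancel₀ _ (ne_of_gt h)
        simp only [hβ]; linarith
    have hβi₀ : β i₀ = 0 := by
      simp only [hβ, hm]
      field_simp
      simp
    have hβsum : ∑ i ∈ s, β i • f i = ∑ i ∈ s, α i • f i := by
      simp only [hβ, sub_smul, Finset.sum_sub_distrib, mul_smul]
      rw [← Finset.smul_sum, hesum, smul_zero, sub_zero]
    have herase : ∑ i ∈ s.erase i₀, β i • f i = ∑ i ∈ s, α i • f i := by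
      rw [← hβsum]
      exact Finset.sum_erase s (by rw [hβi₀, zero_smul])
    obtain ⟨t, γ, hγ0, hγli, hγsum⟩ := ih (s.erase i₀) (Finset.erase_ssubset hi₀s) β hβ0
    exact ⟨t, γ, hγ0, hγli, by rw [hγsum, herase]⟩

end Aux

section Closed

variable {V : Type*} [NormedAddCommGroup V] [NormedSpace ℝ V]

/-- The linear map sending coefficients to the corresponding combination. -/
noncomputable def combMap {ι : Type*} [Fintype ι] (g : ι → V) : (ι → ℝ) →ₗ[ℝ] V where
  toFun := fun β => ∑ i, β i • g i
  map_add' := by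
    intro x y
    simp [add_smul, Finset.sum_add_distrib]
  map_smul' := by
    intro c x
    simp [smul_smul, Finset.smul_sum]

lemma isClosed_cone {n : ℕ} (f : Fin n → V) :
    IsClosed {x : V | ∃ α : Fin n → ℝ, (∀ i, 0 ≤ α i) ∧ x = ∑ i, α i • f i} := by
  classical
  have hEq : {x : V | ∃ α : Fin n → ℝ, (∀ i, 0 ≤ α i) ∧ x = ∑ i, α i • f i} =
      ⋃ t : {t : Finset (Fin n) // LinearIndependent ℝ (fun i : t => f i)},
        (combMap (fun i : ↥t.1 => f i)) '' {β : ↥t.1 → ℝ | ∀ i, 0 ≤ β i} := by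
    ext x
    simp only [Set.mem_setOf_eq, Set.mem_iUnion, Set.mem_image]
    constructor
    · rintro ⟨α, hα, rfl⟩
      obtain ⟨t, β, hβ0, hli, hsum⟩ := cone_caratheodory f Finset.univ α hα
      refine ⟨⟨t, hli⟩, fun i => β i, fun i => hβ0 i, ?_⟩
      simp only [combMap, LinearMap.coe_mk, AddHom.coe_mk]
      rw [Finset.sum_coe_sort t (fun i => β i • f i), hsum]
    · rintro ⟨⟨t, hli⟩, β, hβ0, rfl⟩
      refine ⟨fun i => if h : i ∈ t then β ⟨i, h⟩ else 0, ?_, ?_⟩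
      · intro i
        by_cases h : i ∈ t
        · simpa [h] using hβ0 ⟨i, h⟩
        · simp [h]
      · simp only [combMap, LinearMap.coe_mk, AddHom.coe_mk]
        have h1 : ∑ i : Fin n, (if h : i ∈ t then β ⟨i, h⟩ else 0) • f i =
            ∑ i ∈ t, (if h : i ∈ t then β ⟨i, h⟩ else 0) • f i := by
          refine (Finset.sum_subset (Finset.subset_univ t) fun i _ hi => ?_).symm
          simp [hi]
        have h2 : ∑ i ∈ t, (if h : i ∈ t then β ⟨i, h⟩ else 0) • f i =
            ∑ i : ↥t, β i • f (i : Fin n) := by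
          rw [← Finset.sum_coe_sort t (fun i => (if h : i ∈ t then β ⟨i, h⟩ else 0) • f i)]
          exact Finset.sum_congr rfl fun i _ => by simp [i.2]
        rw [h1, h2]
  rw [hEq]
  refine isClosed_iUnion_of_finite fun t => ?_
  have hker : LinearMap.ker (combMap (fun i : ↥t.1 => f i)) = ⊥ := by
    rw [LinearMap.ker_eq_bot']
    intro β hβ
    exact funext (Fintype.linearIndependent_iff.mp t.2 β hβ)
  have hemb := LinearMap.isClosedEmbedding_of_injective (𝕜 := ℝ) hker
  refine hemb.isClosedMap _ ?_
  have : {β : ↥t.1 → ℝ | ∀ i, 0 ≤ β i} = ⋂ i, (fun β : ↥t.1 → ℝ => β i) ⁻¹' Set.Ici 0 := by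
    ext β; simp [Set.mem_iInter]
  rw [this]
  exact isClosed_iInter fun i => IsClosed.preimage (continuous_apply i) isClosed_Ici

end Closed

/-- the cone of desirable gambles
`D = {g : ⟨p, g⟩ ≥ 0 for all p with ⟨p, f i⟩ ≥ 0 ∀ i}` equals the positive hull of the
gambles `f 1, …, f n`. -/
theorem stmt2 {Ω : Type*} [Fintype Ω] [Nonempty Ω] {n : ℕ} (f : Fin n → Ω → ℝ) :
    {g : Ω → ℝ | ∀ p : Ω → ℝ, (∀ i, 0 ≤ ip p (f i)) → 0 ≤ ip p g} =
      {g : Ω → ℝ | ∃ α : Fin n → ℝ, (∀ i, 0 ≤ α i) ∧ g = ∑ i, α i • f i} := by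
  classical
  set V := EuclideanSpace ℝ Ω
  set E : (Ω → ℝ) ≃ₗ[ℝ] V := (WithLp.linearEquiv 2 ℝ (Ω → ℝ)).symm with hE
  have hip : ∀ p g : Ω → ℝ, (inner ℝ (E p) (E g) : ℝ) = ip p g := by
    intro p g
    rw [hE, PiLp.inner_apply]
    simp only [RCLike.inner_apply, conj_trivial, WithLp.coe_symm_linearEquiv,
      PiLp.toLp_apply, ip]
    exact Finset.sum_congr rfl fun x _ => mul_comm _ _
  set F : Fin n → V := fun i => E (f i) with hF
  set K : ConvexCone ℝ V :=
    { carrier := {x : V | ∃ α : Fin n → ℝ, (∀ i, 0 ≤ α i) ∧ x = ∑ i, α i • F i}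
      smul_mem' := by
        rintro c hc x ⟨α, hα, rfl⟩
        exact ⟨fun i => c * α i, fun i => mul_nonneg hc.le (hα i), by
          simp [Finset.smul_sum, mul_smul]⟩
      add_mem' := by
        rintro x ⟨α, hα, rfl⟩ y ⟨α', hα', rfl⟩
        exact ⟨fun i => α i + α' i, fun i => add_nonneg (hα i) (hα' i), by
          simp [add_smul, Finset.sum_add_distrib]⟩ } with hK
  have hKne : (K : Set V).Nonempty := ⟨0, ⟨fun _ => 0, fun _ => le_refl 0, by simp⟩⟩
  have hKcl : IsClosed (K : Set V) := isClosed_cone F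
  have hFmem : ∀ i, F i ∈ (K : Set V) := by
    intro i
    refine ⟨fun j => if j = i then 1 else 0, fun j => by positivity, ?_⟩
    rw [Finset.sum_eq_single i (fun j _ hj => by simp [hj]) (by simp)]
    simp
  have hdual : ∀ p : V, p ∈ (ProperCone.innerDual (K : Set V) : Set V) ↔
      ∀ i, 0 ≤ (inner ℝ p (F i) : ℝ) := by
    intro p
    rw [SetLike.mem_coe, ProperCone.mem_innerDual]
    constructor
    · intro hp i
      rw [real_inner_comm]
      exact hp (hFmem i)
    · rintro hp x ⟨α, hα, rfl⟩
      rw [sum_inner]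
      refine Finset.sum_nonneg fun i _ => ?_
      rw [real_inner_smul_left, real_inner_comm]
      exact mul_nonneg (hα i) (hp i)
  have hdd : ((ProperCone.innerDual ((ProperCone.innerDual (K : Set V)) : Set V)) : Set V) =
      (K : Set V) := by
    obtain ⟨C, hC⟩ := ConvexCone.canLift.prf K ⟨hKne, hKcl⟩
    rw [← hC]
    exact congrArg (fun D : ProperCone ℝ V => (D : Set V)) (ProperCone.innerDual_innerDual C)
  ext g
  simp only [Set.mem_setOf_eq]
  constructor
  · intro hg
    have hmem : E g ∈ ((ProperCone.innerDual ((ProperCone.innerDual (K : Set V)) : Set V)) :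
          Set V) := by
      rw [SetLike.mem_coe, ProperCone.mem_innerDual]
      intro p hp
      have hp' : ∀ i, 0 ≤ (inner ℝ p (F i) : ℝ) := (hdual p).mp hp
      have key : ∀ i, (inner ℝ p (F i) : ℝ) = ip (E.symm p) (f i) := by
        intro i
        rw [← hip (E.symm p) (f i)]
        simp [hF]
      have := hg (E.symm p) fun i => by rw [← key i]; exact hp' i
      rw [← hip] at this
      simpa using this
    have : E g ∈ (K : Set V) := by rw [← hdd]; exact hmem
    obtain ⟨α, hα, hsum⟩ := this
    refine ⟨α, hα, ?_⟩
    have := congrArg E.symm hsum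
    simpa [map_sum, hF] using this
  · rintro ⟨α, hα, rfl⟩ p hp
    rw [← hip, map_sum]
    have hEsmul : ∀ i : Fin n, E (α i • f i) = α i • F i := fun i => by simp [hF]
    simp only [hEsmul]
    rw [inner_sum]
    refine Finset.sum_nonneg fun i _ => ?_
    rw [real_inner_smul_right]
    exact mul_nonneg (hα i) (by rw [hip]; exact hp i)
end

section
/- Let f_1, …, f_n be gambles on a finite nonempty set Ω such that every nonzero p : Ω → ℝ with ⟨p, f_i⟩ ≥ 0 for all i satisfies ⟨p, 1_Ω⟩ > 0, and let M = {p : Ω → ℝ : ⟨p, f_i⟩ ≥ 0 for all i, ⟨p, 1_Ω⟩ = 1} be nonempty. Let E ∈ M and let h be a gamble such that ⟨E, h⟩ = min_{p∈M} ⟨p, h⟩, and set I = {i : ⟨E, f_i⟩ = 0}. Then there exist α_i ≥ 0 for i ∈ I and β ∈ ℝ such that h = Σ_{i∈I} α_i f_i + β·1_Ω. -/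
open scoped BigOperators

def oneG (Ω : Type*) : Ω → ℝ := fun _ => 1

section iplem
variable {Ω : Type*} [Fintype Ω]

lemma ip_comm (f g : Ω → ℝ) : ip f g = ip g f := by
  simp [ip, mul_comm]

lemma ip_add_left (f g h : Ω → ℝ) : ip (f + g) h = ip f h + ip g h := by
  simp [ip, add_mul, Finset.sum_add_distrib]

lemma ip_sub_left (f g h : Ω → ℝ) : ip (f - g) h = ip f h - ip g h := by
  simp [ip, sub_mul, Finset.sum_sub_distrib]

lemma ip_smul_left (r : ℝ) (f g : Ω → ℝ) : ip (r • f) g = r * ip f g := by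
  simp [ip, Finset.mul_sum, mul_assoc]

lemma ip_sub_right (f g h : Ω → ℝ) : ip f (g - h) = ip f g - ip f h := by
  rw [ip_comm, ip_sub_left, ip_comm g f, ip_comm h f]

lemma ip_smul_right (r : ℝ) (f g : Ω → ℝ) : ip f (r • g) = r * ip f g := by
  rw [ip_comm, ip_smul_left, ip_comm]

lemma ip_add_right (f g h : Ω → ℝ) : ip f (g + h) = ip f g + ip f h := by
  rw [ip_comm, ip_add_left, ip_comm g f, ip_comm h f]

lemma ip_neg_left (f g : Ω → ℝ) : ip (-f) g = -ip f g := by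
  simp [ip, Finset.sum_neg_distrib]

lemma ip_zero_right (f : Ω → ℝ) : ip f 0 = 0 := by simp [ip]

lemma ip_self_eq_zero {f : Ω → ℝ} (h : ip f f = 0) : f = 0 := by
  funext x
  have hnn : ∀ y ∈ Finset.univ, (0:ℝ) ≤ f y * f y := fun y _ => mul_self_nonneg _
  have := (Finset.sum_eq_zero_iff_of_nonneg hnn).mp h x (Finset.mem_univ x)
  simpa [mul_self_eq_zero] using this

end iplem

lemma farkas {Ω : Type*} [Fintype Ω] : ∀ (m : ℕ) (v : Fin m → Ω → ℝ) (h : Ω → ℝ),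
    (∀ y : Ω → ℝ, (∀ i, 0 ≤ ip y (v i)) → 0 ≤ ip y h) →
    ∃ c : Fin m → ℝ, (∀ i, 0 ≤ c i) ∧ h = ∑ i, c i • v i := by
  intro m
  induction m with
  | zero =>
    intro v h hyp
    have h1 : 0 ≤ ip (-h) h := hyp (-h) (fun i => i.elim0)
    have h2 : 0 ≤ ip h h := by
      simp only [ip]
      exact Finset.sum_nonneg fun x _ => mul_self_nonneg _
    have h3 : ip h h = 0 := le_antisymm (by rw [ip_neg_left] at h1; linarith) h2
    exact ⟨0, fun i => le_refl _, by simp [ip_self_eq_zero h3]⟩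
  | succ m IH =>
    intro v h hyp
    by_cases hc : ∀ y : Ω → ℝ, (∀ i : Fin m, 0 ≤ ip y (v i.castSucc)) → 0 ≤ ip y h
    · obtain ⟨c, hc0, hsum⟩ := IH (fun i => v i.castSucc) h hc
      refine ⟨Fin.snoc c 0, ?_, ?_⟩
      · intro i
        refine Fin.lastCases ?_ ?_ i <;> simp [hc0]
      · rw [Fin.sum_univ_castSucc]
        simpa using hsum
    · push_neg at hc
      obtain ⟨p, hp, hph⟩ := hc
      set u := v (Fin.last m) with hu
      have hd : ip p u < 0 := by
        by_contra hge
        push_neg at hge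
        have : ∀ i : Fin (m+1), 0 ≤ ip p (v i) := by
          intro i
          refine Fin.lastCases ?_ ?_ i
          · exact hge
          · exact hp
        exact absurd (hyp p this) (not_le.mpr hph)
      set d := ip p u with hdd
      have hdne : d ≠ 0 := ne_of_lt hd
      -- transformed vectors
      have key : ∀ y : Ω → ℝ,
          (∀ i : Fin m, 0 ≤ ip y (v i.castSucc - (ip p (v i.castSucc) / d) • u)) →
          0 ≤ ip y (h - (ip p h / d) • u) := by
        intro y hy
        set y' := y - (ip y u / d) • p with hy'
        have hid : ∀ x : Ω → ℝ, ip y' x = ip y (x - (ip p x / d) • u) := by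
          intro x
          rw [hy', ip_sub_left, ip_smul_left, ip_sub_right, ip_smul_right, ip_comm p x]
          ring
        have hall : ∀ i : Fin (m+1), 0 ≤ ip y' (v i) := by
          intro i
          refine Fin.lastCases ?_ ?_ i
          · rw [hid]
            have : ip p u / d = 1 := div_self hdne
            rw [this, one_smul, sub_self, ip_zero_right]
          · intro i
            rw [hid]
            exact hy i
        have := hyp y' hall
        rw [hid h] at this
        exact this
      obtain ⟨c, hc0, hsum⟩ := IH (fun i => v i.castSucc - (ip p (v i.castSucc) / d) • u)
        (h - (ip p h / d) • u) key
      -- rearrange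
      set μ := ip p h / d - ∑ i, c i * (ip p (v i.castSucc) / d) with hμ
      have hμ0 : 0 ≤ μ := by
        have h1 : 0 < ip p h / d := div_pos_of_neg_of_neg hph hd
        have h2 : ∑ i, c i * (ip p (v i.castSucc) / d) ≤ 0 := by
          apply Finset.sum_nonpos
          intro i _
          apply mul_nonpos_of_nonneg_of_nonpos (hc0 i)
          exact div_nonpos_of_nonneg_of_nonpos (hp i) (le_of_lt hd)
        rw [hμ]; linarith
      have heq : h = (∑ i, c i • v i.castSucc) + μ • u := by
        have expand : ∑ i, c i • (v i.castSucc - (ip p (v i.castSucc) / d) • u)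
            = (∑ i, c i • v i.castSucc) - (∑ i, c i * (ip p (v i.castSucc) / d)) • u := by
          rw [Finset.sum_smul]
          rw [← Finset.sum_sub_distrib]
          congr 1
          funext i
          rw [smul_sub, smul_smul]
        rw [expand] at hsum
        have : h = (∑ i, c i • v i.castSucc) - (∑ i, c i * (ip p (v i.castSucc) / d)) • u
            + (ip p h / d) • u := by
          rw [← hsum]; abel
        rw [this, hμ, sub_smul]
        abel
      refine ⟨Fin.snoc c μ, ?_, ?_⟩
      · intro i
        refine Fin.lastCases ?_ ?_ i <;> simp [hμ0, hc0]
      · rw [Fin.sum_univ_castSucc]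
        simpa using heq

lemma farkas' {Ω ι : Type*} [Fintype Ω] [Fintype ι] (v : ι → Ω → ℝ) (h : Ω → ℝ)
    (hyp : ∀ y : Ω → ℝ, (∀ i, 0 ≤ ip y (v i)) → 0 ≤ ip y h) :
    ∃ c : ι → ℝ, (∀ i, 0 ≤ c i) ∧ h = ∑ i, c i • v i := by
  let e := Fintype.equivFin ι
  obtain ⟨c, hc0, hsum⟩ := farkas (Fintype.card ι) (fun j => v (e.symm j)) h
    (fun y hy => hyp y (fun i => by simpa using hy (e i)))
  refine ⟨fun i => c (e i), fun i => hc0 _, ?_⟩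
  rw [hsum]
  rw [← e.symm.sum_comp (fun i => c (e i) • v i)]
  simp

/-- if `E ∈ M` and `⟨E, h⟩ = min_{p∈M} ⟨p, h⟩`, then `h` is a nonnegative
combination of the constraints active at `E` plus a multiple of the constant gamble. -/
theorem stmt3 {Ω : Type*} [Fintype Ω] [Nonempty Ω] {n : ℕ} (f : Fin n → Ω → ℝ)
    (hpos : ∀ p : Ω → ℝ, p ≠ 0 → (∀ i, 0 ≤ ip p (f i)) → 0 < ip p (oneG Ω))
    (M : Set (Ω → ℝ))
    (hM : M = {p | (∀ i, 0 ≤ ip p (f i)) ∧ ip p (oneG Ω) = 1})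
    (hMne : M.Nonempty)
    (E : Ω → ℝ) (hE : E ∈ M)
    (h : Ω → ℝ) (hmin : ∀ p ∈ M, ip E h ≤ ip p h)
    (I : Set (Fin n)) (hI : I = {i | ip E (f i) = 0}) :
    ∃ (α : Fin n → ℝ) (β : ℝ), (∀ i, 0 ≤ α i) ∧ (∀ i, i ∉ I → α i = 0) ∧
      h = (∑ i, α i • f i) + β • oneG Ω := by
  classical
  rw [hM] at hE
  obtain ⟨hEf, hE1⟩ := hE
  -- generators
  set v : (Fin n ⊕ Bool) → Ω → ℝ := fun j =>
    match j with
    | Sum.inl i => if i ∈ I then f i else 0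
    | Sum.inr true => oneG Ω
    | Sum.inr false => -(oneG Ω) with hv
  have hyp : ∀ y : Ω → ℝ, (∀ j, 0 ≤ ip y (v j)) → 0 ≤ ip y h := by
    intro y hy
    have hy1 : ip y (oneG Ω) = 0 := by
      have h1 := hy (Sum.inr true)
      have h2 := hy (Sum.inr false)
      simp only [hv] at h1 h2
      rw [ip_comm, ip_neg_left, ip_comm] at h2
      linarith
    have hyI : ∀ i ∈ I, 0 ≤ ip y (f i) := by
      intro i hi
      have := hy (Sum.inl i)
      simpa [hv, hi] using this
    have hEpos : ∀ i, i ∉ I → 0 < ip E (f i) := by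
      intro i hi
      rcases lt_or_eq_of_le (hEf i) with hlt | heqz
      · exact hlt
      · exact absurd (by rw [hI]; exact heqz.symm) hi
    -- choose t
    set tset : Finset ℝ := insert 1 (Finset.univ.image fun i : Fin n =>
      if 0 ≤ ip y (f i) then 1 else ip E (f i) / (-(ip y (f i)))) with htset
    have htne : tset.Nonempty := Finset.insert_nonempty _ _
    set t := tset.min' htne with ht
    have htpos : 0 < t := by
      have hmem := tset.min'_mem htne
      rw [← ht] at hmem
      rw [htset] at hmem
      rcases Finset.mem_insert.mp hmem with h1 | h2
      · rw [h1]; norm_num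
      · obtain ⟨i, _, hi⟩ := Finset.mem_image.mp h2
        rw [← hi]
        by_cases hyi : 0 ≤ ip y (f i)
        · simp [hyi]
        · have hiI : i ∉ I := by
            intro hin
            exact hyi (hyI i hin)
          have := hEpos i hiI
          push_neg at hyi
          simp only [hyi.not_ge, if_false]
          exact div_pos this (by linarith)
    have hconstr : ∀ i, 0 ≤ ip (E + t • y) (f i) := by
      intro i
      rw [ip_add_left, ip_smul_left]
      by_cases hyi : 0 ≤ ip y (f i)
      · have := hEf i
        nlinarith
      · push_neg at hyi
        have hiI : i ∉ I := fun hin => absurd (hyI i hin) (not_le.mpr hyi)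
        have hle : t ≤ ip E (f i) / (-(ip y (f i))) := by
          apply Finset.min'_le
          rw [htset]
          apply Finset.mem_insert_of_mem
          apply Finset.mem_image.mpr
          exact ⟨i, Finset.mem_univ i, by simp [hyi.not_ge]⟩
        rw [le_div_iff₀ (by linarith)] at hle
        nlinarith
    have hmem : E + t • y ∈ M := by
      rw [hM]
      refine ⟨hconstr, ?_⟩
      rw [ip_add_left, ip_smul_left, hE1, hy1]
      ring
    have := hmin _ hmem
    rw [ip_add_left, ip_smul_left] at this
    nlinarith
  obtain ⟨c, hc0, hsum⟩ := farkas' v h hyp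
  refine ⟨fun i => if i ∈ I then c (Sum.inl i) else 0,
    c (Sum.inr true) - c (Sum.inr false), ?_, ?_, ?_⟩
  · intro i
    by_cases hi : i ∈ I <;> simp [hi, hc0]
  · intro i hi
    simp [hi]
  · rw [hsum, Fintype.sum_sum_type, Fintype.sum_bool]
    have h1 : ∀ i : Fin n, c (Sum.inl i) • v (Sum.inl i)
        = (if i ∈ I then c (Sum.inl i) else 0) • f i := by
      intro i
      by_cases hi : i ∈ I <;> simp [hv, hi]
    rw [Finset.sum_congr rfl (fun i _ => h1 i)]
    have h2 : c (Sum.inr true) • v (Sum.inr true) + c (Sum.inr false) • v (Sum.inr false)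
        = (c (Sum.inr true) - c (Sum.inr false)) • oneG Ω := by
      simp only [hv]
      rw [sub_smul, smul_neg]
      abel
    rw [h2]
end

section
/- Let Ω, K, b, M, E̲ and the faces M_f be as in the setting of a coherent assessment, and let P̲ be an extension of (K, b) with credal set M'. Then for every gamble h and every f ∈ K, P̲(h) ≤ max_{p ∈ M_f} ⟨p, h⟩. -/
open scoped BigOperators

/-- A probability mass vector on `Ω`. -/
def IsPMV {Ω : Type*} [Fintype Ω] (p : Ω → ℝ) : Prop :=
  (∀ x, 0 ≤ p x) ∧ ∑ x, p x = 1

/-- for any extension `P̲` of a coherent assessment `(K, b)`, any gamble `h`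
and any `f ∈ K`, we have `P̲(h) ≤ max_{p ∈ M_f} ⟨p, h⟩`, i.e. `P̲(h)` is dominated by the
value of `h` at some point of the face `M_f = {p ∈ M : ⟨p, f⟩ = E̲(f)}`. -/
theorem stmt11 {Ω : Type*} [Fintype Ω] [Nonempty Ω]
    (K : Finset (Ω → ℝ)) (b : (Ω → ℝ) → ℝ)
    (M : Set (Ω → ℝ)) (hM : M = {p | IsPMV p ∧ ∀ g ∈ K, b g ≤ ip p g})
    (hMne : M.Nonempty)
    (lE : (Ω → ℝ) → ℝ)
    (hlE : ∀ h : Ω → ℝ, IsLeast {r : ℝ | ∃ p ∈ M, r = ip p h} (lE h))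
    (hcoh : ∀ g ∈ K, lE g = b g)
    (M' : Set (Ω → ℝ)) (hne' : M'.Nonempty) (hcomp' : IsCompact M')
    (hconv' : Convex ℝ M') (hpmv' : ∀ p ∈ M', IsPMV p)
    (lP : (Ω → ℝ) → ℝ)
    (hlP : ∀ h : Ω → ℝ, IsLeast {r : ℝ | ∃ p ∈ M', r = ip p h} (lP h))
    (hb' : ∀ g ∈ K, lP g = b g) :
    ∀ h : Ω → ℝ, ∀ f ∈ K, ∃ p ∈ {q ∈ M | ip q f = lE f}, lP h ≤ ip p h := by
  intro h f hf
  obtain ⟨q, hq, hqf⟩ := (hlP f).1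
  have hqK : ∀ g ∈ K, b g ≤ ip q g := fun g hg => by
    have := (hlP g).2 ⟨q, hq, rfl⟩
    rwa [hb' g hg] at this
  have hqM : q ∈ M := by rw [hM]; exact ⟨hpmv' q hq, hqK⟩
  refine ⟨q, ⟨hqM, ?_⟩, (hlP h).2 ⟨q, hq, rfl⟩⟩
  rw [← hqf, hb' f hf, hcoh f hf]
end

section
/- Let Ω, K, b, M, E̲ and the faces M_f be as in the setting of a coherent assessment with K nonempty, and let P̲ be an extension of (K, b). Then for every gamble h, P̲(h) ≤ min_{f ∈ K} max_{p ∈ M_f} ⟨p, h⟩. -/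
open scoped BigOperators

/-- for any extension `P̲` of a coherent assessment `(K, b)` and any gamble
`h`, `P̲(h) ≤ min_{f ∈ K} max_{p ∈ M_f} ⟨p, h⟩`. -/
theorem stmt12 {Ω : Type*} [Fintype Ω] [Nonempty Ω]
    (K : Finset (Ω → ℝ)) (hK : K.Nonempty) (b : (Ω → ℝ) → ℝ)
    (M : Set (Ω → ℝ)) (hM : M = {p | IsPMV p ∧ ∀ g ∈ K, b g ≤ ip p g})
    (hMne : M.Nonempty)
    (lE : (Ω → ℝ) → ℝ)
    (hlE : ∀ h : Ω → ℝ, IsLeast {r : ℝ | ∃ p ∈ M, r = ip p h} (lE h))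
    (hcoh : ∀ g ∈ K, lE g = b g)
    (M' : Set (Ω → ℝ)) (hne' : M'.Nonempty) (hcomp' : IsCompact M')
    (hconv' : Convex ℝ M') (hpmv' : ∀ p ∈ M', IsPMV p)
    (lP : (Ω → ℝ) → ℝ)
    (hlP : ∀ h : Ω → ℝ, IsLeast {r : ℝ | ∃ p ∈ M', r = ip p h} (lP h))
    (hb' : ∀ g ∈ K, lP g = b g) :
    ∀ h : Ω → ℝ,
      lP h ≤ sInf {r : ℝ | ∃ f ∈ K,
        r = sSup {s : ℝ | ∃ p ∈ {q ∈ M | ip q f = lE f}, s = ip p h}} := by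
  intro h
  apply le_csInf
  · obtain ⟨f, hf⟩ := hK
    exact ⟨_, f, hf, rfl⟩
  · rintro r ⟨f, hfK, rfl⟩
    -- pick p' ∈ M' attaining lP f
    obtain ⟨p', hp'M', hp'f⟩ := (hlP f).1
    -- p' ∈ M
    have hp'M : p' ∈ M := by
      rw [hM]
      refine ⟨hpmv' p' hp'M', fun g hg => ?_⟩
      have := (hlP g).2 ⟨p', hp'M', rfl⟩
      rw [hb' g hg] at this
      exact this
    -- p' is in the face M_f
    have hface : p' ∈ {q ∈ M | ip q f = lE f} := by
      refine ⟨hp'M, ?_⟩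
      rw [hcoh f hfK, ← hb' f hfK, hp'f]
    -- the set is bounded above
    have hbdd : BddAbove {s : ℝ | ∃ p ∈ {q ∈ M | ip q f = lE f}, s = ip p h} := by
      refine ⟨∑ x, |h x|, ?_⟩
      rintro s ⟨p, ⟨hpM, _⟩, rfl⟩
      rw [hM] at hpM
      obtain ⟨⟨hnn, hsum⟩, _⟩ := hpM
      unfold ip
      apply Finset.sum_le_sum
      intro x _
      have hle1 : p x ≤ 1 := by
        rw [← hsum]
        exact Finset.single_le_sum (fun i _ => hnn i) (Finset.mem_univ x)
      calc p x * h x ≤ p x * |h x| := mul_le_mul_of_nonneg_left (le_abs_self _) (hnn x)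
        _ ≤ 1 * |h x| := mul_le_mul_of_nonneg_right hle1 (abs_nonneg _)
        _ = |h x| := one_mul _
    calc lP h ≤ ip p' h := (hlP h).2 ⟨p', hp'M', rfl⟩
      _ ≤ _ := le_csSup hbdd ⟨p', hface, rfl⟩
end

section
/- Let Ω, K, b, M, E̲ and the faces M_f be as in the setting of a coherent assessment with K nonempty. Then for every gamble h there exists an extension P̲' of (K, b) (namely the lower envelope of the convex hull of one maximizer of ⟨·, h⟩ on each face M_f, f ∈ K) such that P̲'(h) = min_{f ∈ K} max_{p ∈ M_f} ⟨p, h⟩. -/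
open scoped BigOperators

lemma ip_isLinear {Ω : Type*} [Fintype Ω] (g : Ω → ℝ) :
    IsLinearMap ℝ (fun p : Ω → ℝ => ip p g) := by
  constructor
  · intro p q
    simp [ip, add_mul, Finset.sum_add_distrib]
  · intro c p
    simp [ip, Finset.mul_sum, mul_assoc]

lemma ip_continuous {Ω : Type*} [Fintype Ω] (g : Ω → ℝ) :
    Continuous (fun p : Ω → ℝ => ip p g) := by
  unfold ip
  exact continuous_finset_sum _ fun x _ => (continuous_apply x).mul continuous_const

/-- for every gamble `h` there is an extension `P̲'` of the coherent
assessment `(K, b)` attaining the bound `P̲'(h) = min_{f ∈ K} max_{p ∈ M_f} ⟨p, h⟩`. -/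
theorem stmt13 {Ω : Type*} [Fintype Ω] [Nonempty Ω]
    (K : Finset (Ω → ℝ)) (hK : K.Nonempty) (b : (Ω → ℝ) → ℝ)
    (M : Set (Ω → ℝ)) (hM : M = {p | IsPMV p ∧ ∀ g ∈ K, b g ≤ ip p g})
    (hMne : M.Nonempty)
    (lE : (Ω → ℝ) → ℝ)
    (hlE : ∀ h : Ω → ℝ, IsLeast {r : ℝ | ∃ p ∈ M, r = ip p h} (lE h))
    (hcoh : ∀ g ∈ K, lE g = b g) :
    ∀ h : Ω → ℝ, ∃ (M' : Set (Ω → ℝ)) (lP' : (Ω → ℝ) → ℝ),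
      M'.Nonempty ∧ IsCompact M' ∧ Convex ℝ M' ∧ (∀ p ∈ M', IsPMV p) ∧
      (∀ g : Ω → ℝ, IsLeast {r : ℝ | ∃ p ∈ M', r = ip p g} (lP' g)) ∧
      (∀ g ∈ K, lP' g = b g) ∧
      lP' h = sInf {r : ℝ | ∃ f ∈ K,
        r = sSup {s : ℝ | ∃ p ∈ {q ∈ M | ip q f = lE f}, s = ip p h}} := by
  intro h
  classical
  -- convexity of M
  have hMconv : Convex ℝ M := by
    rw [hM]
    have h1 : Convex ℝ {p : Ω → ℝ | IsPMV p} := by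
      have : {p : Ω → ℝ | IsPMV p} =
          (⋂ x, {p : Ω → ℝ | 0 ≤ p x}) ∩ {p : Ω → ℝ | (∑ x, p x) = 1} := by
        ext p; simp [IsPMV, Set.mem_iInter]
      rw [this]
      refine Convex.inter (convex_iInter fun x => ?_) ?_
      · exact convex_halfSpace_ge
          ⟨fun p q => rfl, fun c p => rfl⟩ 0
      · exact convex_hyperplane
          ⟨fun p q => Finset.sum_add_distrib, fun c p => by simp [Finset.mul_sum]⟩ 1
    have h2 : Convex ℝ {p : Ω → ℝ | ∀ g ∈ K, b g ≤ ip p g} := by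
      have : {p : Ω → ℝ | ∀ g ∈ K, b g ≤ ip p g} =
          ⋂ g ∈ K, {p : Ω → ℝ | b g ≤ ip p g} := by
        ext p; simp
      rw [this]
      exact convex_iInter₂ fun g _ => convex_halfSpace_ge (ip_isLinear g) (b g)
    have : {p : Ω → ℝ | IsPMV p ∧ ∀ g ∈ K, b g ≤ ip p g} =
        {p : Ω → ℝ | IsPMV p} ∩ {p : Ω → ℝ | ∀ g ∈ K, b g ≤ ip p g} := rfl
    rw [this]; exact h1.inter h2
  -- closedness and compactness of M
  have hMclosed : IsClosed M := by
    rw [hM]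
    have : {p : Ω → ℝ | IsPMV p ∧ ∀ g ∈ K, b g ≤ ip p g} =
        ((⋂ x, {p : Ω → ℝ | 0 ≤ p x}) ∩ {p : Ω → ℝ | (∑ x, p x) = 1}) ∩
          ⋂ g ∈ K, {p : Ω → ℝ | b g ≤ ip p g} := by
      ext p; simp [IsPMV, Set.mem_iInter]
    rw [this]
    refine IsClosed.inter (IsClosed.inter ?_ ?_) ?_
    · exact isClosed_iInter fun x => isClosed_le continuous_const (continuous_apply x)
    · exact isClosed_eq (continuous_finset_sum _ fun x _ => continuous_apply x)
        continuous_const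
    · exact isClosed_biInter fun g _ => isClosed_le continuous_const (ip_continuous g)
  have hMcompact : IsCompact M := by
    refine IsCompact.of_isClosed_subset (isCompact_univ_pi fun _ : Ω => isCompact_Icc
      (a := (0:ℝ)) (b := 1)) hMclosed ?_
    intro p hp
    rw [hM] at hp
    obtain ⟨⟨hp0, hp1⟩, -⟩ := hp
    intro x _
    refine ⟨hp0 x, ?_⟩
    calc p x ≤ ∑ y, p y := Finset.single_le_sum (fun y _ => hp0 y) (Finset.mem_univ x)
    _ = 1 := hp1
  -- faces and maximizers
  set F : (Ω → ℝ) → Set (Ω → ℝ) := fun f => {q ∈ M | ip q f = lE f} with hF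
  have hFsub : ∀ f, F f ⊆ M := fun f q hq => hq.1
  have hFne : ∀ f, (F f).Nonempty := by
    intro f
    obtain ⟨p, hpM, hpe⟩ := (hlE f).1
    exact ⟨p, hpM, hpe.symm⟩
  have hFcompact : ∀ f, IsCompact (F f) := by
    intro f
    have : F f = M ∩ {q | ip q f = lE f} := rfl
    rw [this]
    exact hMcompact.inter_right (isClosed_eq (ip_continuous f) continuous_const)
  have hmax : ∀ f : Ω → ℝ, ∃ p, p ∈ F f ∧ ∀ q ∈ F f, ip q h ≤ ip p h := by
    intro f
    obtain ⟨p, hp, hmax⟩ := (hFcompact f).exists_isMaxOn (hFne f)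
      ((ip_continuous h).continuousOn)
    exact ⟨p, hp, fun q hq => hmax hq⟩
  choose P hPF hPmax using hmax
  -- the finite set of maximizers and its convex hull
  set S : Finset (Ω → ℝ) := K.image P with hS
  set M' : Set (Ω → ℝ) := convexHull ℝ (↑S) with hM'
  have hSsubM : (↑S : Set (Ω → ℝ)) ⊆ M := by
    intro q hq
    simp only [hS, Finset.coe_image, Set.mem_image, Finset.mem_coe] at hq
    obtain ⟨f, hf, rfl⟩ := hq
    exact hFsub f (hPF f)
  have hM'subM : M' ⊆ M := convexHull_min hSsubM hMconv
  have hM'ne : M'.Nonempty := by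
    obtain ⟨f, hf⟩ := hK
    exact ⟨P f, subset_convexHull ℝ _ (by
      simp only [hS, Finset.coe_image, Set.mem_image, Finset.mem_coe]
      exact ⟨f, hf, rfl⟩)⟩
  have hM'compact : IsCompact M' := S.finite_toSet.isCompact_convexHull ℝ
  have hM'conv : Convex ℝ M' := convex_convexHull ℝ _
  -- lower bounds on ip over M' propagate from the generating points
  have hLB : ∀ (g : Ω → ℝ) (c : ℝ), (∀ f ∈ K, c ≤ ip (P f) g) → ∀ q ∈ M', c ≤ ip q g := by
    intro g c hc q hq
    have : M' ⊆ {q | c ≤ ip q g} := by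
      refine convexHull_min ?_ (convex_halfSpace_ge (ip_isLinear g) c)
      intro q hq
      simp only [hS, Finset.coe_image, Set.mem_image, Finset.mem_coe] at hq
      obtain ⟨f, hf, rfl⟩ := hq
      exact hc f hf
    exact this hq
  -- the lower envelope
  set lP' : (Ω → ℝ) → ℝ := fun g => sInf {r : ℝ | ∃ p ∈ M', r = ip p g} with hlP'
  have hset : ∀ g : Ω → ℝ, {r : ℝ | ∃ p ∈ M', r = ip p g} = (fun p => ip p g) '' M' := by
    intro g; ext r
    simp [Set.mem_image, eq_comm]
  have hleast : ∀ g : Ω → ℝ, IsLeast {r : ℝ | ∃ p ∈ M', r = ip p g} (lP' g) := by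
    intro g
    have hcpt : IsCompact {r : ℝ | ∃ p ∈ M', r = ip p g} := by
      rw [hset g]
      exact hM'compact.image (ip_continuous g)
    have hne : {r : ℝ | ∃ p ∈ M', r = ip p g}.Nonempty := by
      obtain ⟨p, hp⟩ := hM'ne
      exact ⟨ip p g, p, hp, rfl⟩
    have hbdd : BddBelow {r : ℝ | ∃ p ∈ M', r = ip p g} := hcpt.bddBelow
    exact ⟨hcpt.isClosed.csInf_mem hne hbdd, fun r hr => csInf_le hbdd hr⟩
  -- extension property: lP' agrees with b on K
  have hext : ∀ g ∈ K, lP' g = b g := by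
    intro g hg
    refine (hleast g).unique ⟨⟨P g, subset_convexHull ℝ _ (by
      simp only [hS, Finset.coe_image, Set.mem_image, Finset.mem_coe]
      exact ⟨g, hg, rfl⟩), ?_⟩, ?_⟩
    · have := (hPF g).2
      rw [this, hcoh g hg]
    · rintro r ⟨q, hq, rfl⟩
      refine hLB g (b g) (fun f hf => ?_) q hq
      have : P f ∈ M := hFsub f (hPF f)
      rw [hM] at this
      exact this.2 g hg
  -- value on h
  have hSup : ∀ f ∈ K,
      sSup {s : ℝ | ∃ p ∈ {q ∈ M | ip q f = lE f}, s = ip p h} = ip (P f) h := by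
    intro f _
    refine IsGreatest.csSup_eq ⟨⟨P f, hPF f, rfl⟩, ?_⟩
    rintro s ⟨q, hq, rfl⟩
    exact hPmax f q hq
  have hsetK : {r : ℝ | ∃ f ∈ K,
      r = sSup {s : ℝ | ∃ p ∈ {q ∈ M | ip q f = lE f}, s = ip p h}} =
      (fun f => ip (P f) h) '' (↑K : Set (Ω → ℝ)) := by
    ext r
    constructor
    · rintro ⟨f, hf, rfl⟩
      exact ⟨f, hf, (hSup f hf).symm⟩
    · rintro ⟨f, hf, rfl⟩
      exact ⟨f, hf, (hSup f hf).symm⟩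
  have hval : lP' h = sInf {r : ℝ | ∃ f ∈ K,
      r = sSup {s : ℝ | ∃ p ∈ {q ∈ M | ip q f = lE f}, s = ip p h}} := by
    rw [hsetK, ← Finset.inf'_eq_csInf_image K hK (fun f => ip (P f) h)]
    refine (hleast h).unique ⟨?_, ?_⟩
    · obtain ⟨f₀, hf₀, he⟩ := Finset.exists_mem_eq_inf' hK (fun f => ip (P f) h)
      exact ⟨P f₀, subset_convexHull ℝ _ (by
        simp only [hS, Finset.coe_image, Set.mem_image, Finset.mem_coe]
        exact ⟨f₀, hf₀, rfl⟩), he⟩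
    · rintro r ⟨q, hq, rfl⟩
      exact hLB h _ (fun f hf => Finset.inf'_le _ hf) q hq
  exact ⟨M', lP', hM'ne, hM'compact, hM'conv,
    fun p hp => by
      have := hM'subM hp; rw [hM] at this; exact this.1,
    hleast, hext, hval⟩
end

section
/- Let Ω, K, b, M, E̲ and the faces M_f be as in the setting of a coherent assessment with K nonempty, and let P̲ be an extension of (K, b). For E ∈ M let N_M(E) = {h : ⟨E, h⟩ ≤ ⟨p, h⟩ for all p ∈ M} be the normal cone of M at E, and for E, F ∈ M define the normed distance d_E(E, F) = sup_{h ∈ N_M(E), h ≠ 0} (⟨F, h⟩ − ⟨E, h⟩)/‖h‖. Then d(P̲, E̲) ≤ max_{E ∈ ext(M)} min_{f ∈ K} max_{F ∈ ext(M_f)} d_E(E, F), where d(P̲, E̲) = sup_{h ≠ 0} |P̲(h) − E̲(h)|/‖h‖. -/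
open scoped BigOperators ENNReal

/-- Euclidean norm of a gamble. -/
noncomputable def nrm {Ω : Type*} [Fintype Ω] (f : Ω → ℝ) : ℝ := Real.sqrt (ip f f)

/-- The distance between two real-valued functionals on gambles:
`d(F, G) = sup_{h ≠ 0} |F(h) − G(h)|/‖h‖`, a supremum in `[0, ∞]`. -/
noncomputable def dLP {Ω : Type*} [Fintype Ω] (F G : (Ω → ℝ) → ℝ) : ℝ≥0∞ :=
  ⨆ h ∈ {h : Ω → ℝ | h ≠ 0}, ENNReal.ofReal (|F h - G h| / nrm h)

/-- The normed distance `d_E(E, F)` between `E, F ∈ M`: the supremum of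
`(⟨F, h⟩ − ⟨E, h⟩)/‖h‖` over nonzero gambles `h` in the normal cone
`N_M(E) = {h : ⟨E, h⟩ ≤ ⟨p, h⟩ ∀ p ∈ M}`. -/
noncomputable def dNC {Ω : Type*} [Fintype Ω] (M : Set (Ω → ℝ)) (E F : Ω → ℝ) : ℝ≥0∞ :=
  ⨆ h ∈ {h : Ω → ℝ | (∀ p ∈ M, ip E h ≤ ip p h) ∧ h ≠ 0},
    ENNReal.ofReal ((ip F h - ip E h) / nrm h)

section aux

variable {Ω : Type*} [Fintype Ω]

lemma ip_smul_add (a b : ℝ) (p q g : Ω → ℝ) :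
    ip (a • p + b • q) g = a * ip p g + b * ip q g := by
  simp [ip, Finset.sum_add_distrib, Finset.mul_sum, add_mul, mul_assoc]

/-- `p ↦ ip p g` as a continuous linear map. -/
noncomputable def ipCLM (g : Ω → ℝ) : (Ω → ℝ) →L[ℝ] ℝ where
  toFun p := ip p g
  map_add' p q := by simp [ip, Finset.sum_add_distrib, add_mul]
  map_smul' a p := by simp [ip, Finset.mul_sum, mul_assoc]
  cont := by
    refine continuous_finset_sum _ fun x _ => ?_
    exact (continuous_apply x).mul continuous_const

@[simp] lemma ipCLM_apply (g p : Ω → ℝ) : ipCLM g p = ip p g := rfl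

lemma nrm_pos {h : Ω → ℝ} (hh : h ≠ 0) : 0 < nrm h := by
  have : 0 < ip h h := by
    have hne : ∃ x, h x ≠ 0 := by
      by_contra hc
      push_neg at hc
      exact hh (funext fun x => hc x)
    obtain ⟨x, hx⟩ := hne
    have : ∀ y ∈ Finset.univ, 0 ≤ h y * h y := fun y _ => mul_self_nonneg _
    exact Finset.sum_pos' this ⟨x, Finset.mem_univ x, mul_self_pos.2 hx⟩
  exact Real.sqrt_pos.2 this

end aux

/-- for any extension `P̲` of a coherent assessment `(K, b)`,
`d(P̲, E̲) ≤ max_{E ∈ ext(M)} min_{f ∈ K} max_{F ∈ ext(M_f)} d_E(E, F)`. -/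
theorem stmt17 {Ω : Type*} [Fintype Ω] [Nonempty Ω]
    (K : Finset (Ω → ℝ)) (hK : K.Nonempty) (b : (Ω → ℝ) → ℝ)
    (M : Set (Ω → ℝ)) (hM : M = {p | IsPMV p ∧ ∀ g ∈ K, b g ≤ ip p g})
    (hMne : M.Nonempty)
    (lE : (Ω → ℝ) → ℝ)
    (hlE : ∀ h : Ω → ℝ, IsLeast {r : ℝ | ∃ p ∈ M, r = ip p h} (lE h))
    (hcoh : ∀ g ∈ K, lE g = b g)
    (M' : Set (Ω → ℝ)) (hne' : M'.Nonempty) (hcomp' : IsCompact M')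
    (hconv' : Convex ℝ M') (hpmv' : ∀ p ∈ M', IsPMV p)
    (lP : (Ω → ℝ) → ℝ)
    (hlP : ∀ h : Ω → ℝ, IsLeast {r : ℝ | ∃ p ∈ M', r = ip p h} (lP h))
    (hb' : ∀ g ∈ K, lP g = b g) :
    dLP lP lE ≤
      ⨆ E ∈ Set.extremePoints ℝ M, ⨅ f ∈ K,
        ⨆ F ∈ Set.extremePoints ℝ {q ∈ M | ip q f = lE f}, dNC M E F := by
  classical
  -- basic facts about M
  have hMclosed : IsClosed M := by
    have : M = (⋂ x, {p : Ω → ℝ | 0 ≤ p x}) ∩ ({p : Ω → ℝ | ∑ x, p x = 1} ∩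
        ⋂ g ∈ K, {p : Ω → ℝ | b g ≤ ip p g}) := by
      rw [hM]; ext p
      simp only [Set.mem_setOf_eq, Set.mem_inter_iff, Set.mem_iInter, IsPMV]
      tauto
    rw [this]
    refine (isClosed_iInter fun x => isClosed_le continuous_const (continuous_apply x)).inter
      ((isClosed_eq (continuous_finset_sum _ fun x _ => continuous_apply x)
        continuous_const).inter (isClosed_biInter fun g _ =>
          isClosed_le continuous_const (ipCLM g).continuous))
  have hMbdd : Bornology.IsBounded M := by
    refine (Metric.isBounded_iff_subset_closedBall 0).2 ⟨1, fun p hp => ?_⟩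
    rw [hM] at hp
    obtain ⟨⟨hp0, hp1⟩, -⟩ := hp
    have : ‖p‖ ≤ 1 := by
      refine (pi_norm_le_iff_of_nonneg zero_le_one).2 fun x => ?_
      rw [Real.norm_eq_abs, abs_of_nonneg (hp0 x)]
      calc p x ≤ ∑ y, p y := Finset.single_le_sum (fun y _ => hp0 y) (Finset.mem_univ x)
      _ = 1 := hp1
    simpa [Metric.mem_closedBall, dist_zero_right] using this
  have hMcomp : IsCompact M := Metric.isCompact_of_isClosed_isBounded hMclosed hMbdd
  have hMconv : Convex ℝ M := by
    rw [hM]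
    intro p hp q hq a c ha hc hac
    obtain ⟨⟨hp0, hp1⟩, hpK⟩ := hp
    obtain ⟨⟨hq0, hq1⟩, hqK⟩ := hq
    refine ⟨⟨fun x => ?_, ?_⟩, fun g hg => ?_⟩
    · have : (a • p + c • q) x = a * p x + c * q x := by simp [smul_eq_mul]
      rw [this]
      exact add_nonneg (mul_nonneg ha (hp0 x)) (mul_nonneg hc (hq0 x))
    · have : ∀ x, (a • p + c • q) x = a * p x + c * q x := fun x => by simp [smul_eq_mul]
      simp only [this, Finset.sum_add_distrib, ← Finset.mul_sum, hp1, hq1, mul_one, hac]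
    · rw [ip_smul_add]
      calc b g = a * b g + c * b g := by rw [← add_mul, hac, one_mul]
      _ ≤ a * ip p g + c * ip q g :=
        add_le_add (mul_le_mul_of_nonneg_left (hpK g hg) ha)
          (mul_le_mul_of_nonneg_left (hqK g hg) hc)
  -- M' ⊆ M
  have hM'M : M' ⊆ M := by
    intro p hp
    rw [hM]
    refine ⟨hpmv' p hp, fun g hg => ?_⟩
    have := (hlP g).2 ⟨p, hp, rfl⟩
    rwa [hb' g hg] at this
  -- faces of M are exposed
  have faceExposed : ∀ g : Ω → ℝ, IsExposed ℝ M {q ∈ M | ip q g = lE g} := by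
    intro g _
    refine ⟨ipCLM (-g), ?_⟩
    ext x
    simp only [Set.mem_setOf_eq, ipCLM_apply]
    have hipneg : ∀ y : Ω → ℝ, ip y (-g) = -(ip y g) := by
      intro y; simp [ip]
    constructor
    · rintro ⟨hxM, hxg⟩
      refine ⟨hxM, fun y hy => ?_⟩
      rw [hipneg, hipneg, neg_le_neg_iff, hxg]
      exact (hlE g).2 ⟨y, hy, rfl⟩
    · rintro ⟨hxM, hmax⟩
      refine ⟨hxM, le_antisymm ?_ ((hlE g).2 ⟨x, hxM, rfl⟩)⟩
      obtain ⟨p, hpM, hp⟩ := (hlE g).1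
      have := hmax p hpM
      rw [hipneg, hipneg, neg_le_neg_iff] at this
      calc ip x g ≤ ip p g := this
      _ = lE g := hp.symm
  rw [dLP]
  refine iSup₂_le fun h hh => ?_
  have hh : h ≠ 0 := hh
  have hn : 0 < nrm h := nrm_pos hh
  -- lE h ≤ lP h
  have hle : lE h ≤ lP h := by
    obtain ⟨q, hq, hq'⟩ := (hlP h).1
    rw [hq']
    exact (hlE h).2 ⟨q, hM'M hq, rfl⟩
  rw [abs_of_nonneg (sub_nonneg.2 hle)]
  -- choose an extreme point E of M minimizing ip · h
  set Mh := {q ∈ M | ip q h = lE h} with hMhdef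
  have hMhne : Mh.Nonempty := by
    obtain ⟨p, hpM, hp⟩ := (hlE h).1
    exact ⟨p, hpM, hp.symm⟩
  have hMhcomp : IsCompact Mh := (faceExposed h).isCompact hMcomp
  obtain ⟨E, hE⟩ := hMhcomp.extremePoints_nonempty hMhne
  have hEext : E ∈ Set.extremePoints ℝ M :=
    (faceExposed h).isExtreme.extremePoints_subset_extremePoints hE
  have hEM : E ∈ M := hE.1.1
  have hEh : ip E h = lE h := hE.1.2
  have hEmin : ∀ p ∈ M, ip E h ≤ ip p h := by
    intro p hp
    rw [hEh]
    exact (hlE h).2 ⟨p, hp, rfl⟩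
  refine le_iSup₂_of_le E hEext (le_iInf₂ fun f hf => ?_)
  -- the face M_f and a point q ∈ M' ∩ M_f
  set Mf := {q ∈ M | ip q f = lE f} with hMfdef
  obtain ⟨q, hqM', hq⟩ := (hlP f).1
  have hqMf : q ∈ Mf := by
    refine ⟨hM'M hqM', ?_⟩
    rw [← hq, hb' f hf, hcoh f hf]
  have hMfcomp : IsCompact Mf := (faceExposed f).isCompact hMcomp
  have hMfconv : Convex ℝ Mf := (faceExposed f).convex hMconv
  have hKM : closure (convexHull ℝ (Set.extremePoints ℝ Mf)) = Mf :=
    closure_convexHull_extremePoints hMfcomp hMfconv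
  -- lP h ≤ ip q h
  have hlPq : lP h ≤ ip q h := (hlP h).2 ⟨q, hqM', rfl⟩
  -- ENNReal estimate
  refine ENNReal.le_of_forall_pos_le_add fun ε hε _ => ?_
  -- find q' in the convex hull with ip q' h close to ip q h
  have hqcl : ip q h ∈ closure ((fun p => ip p h) '' convexHull ℝ (Set.extremePoints ℝ Mf)) := by
    have : q ∈ closure (convexHull ℝ (Set.extremePoints ℝ Mf)) := by rw [hKM]; exact hqMf
    exact (image_closure_subset_closure_image (ipCLM h).continuous) ⟨q, this, rfl⟩
  have hδ : (0:ℝ) < ε * nrm h := mul_pos (by exact_mod_cast hε) hn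
  obtain ⟨r, ⟨q', hq'ch, hq'r⟩, hrd⟩ := Metric.mem_closure_iff.1 hqcl _ hδ
  rw [← hq'r] at hrd
  have hqq' : ip q h < ip q' h + ε * nrm h := by
    have := abs_sub_lt_iff.1 (by simpa [Real.dist_eq] using hrd)
    linarith [this.1]
  -- maximum principle: find extreme point F of Mf with ip q' h ≤ ip F h
  have hconvOn : ConvexOn ℝ Set.univ (fun p : Ω → ℝ => ip p h) := by
    refine ⟨convex_univ, fun x _ y _ a c ha hc hac => ?_⟩
    simp only [ip_smul_add, smul_eq_mul]
    exact le_rfl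
  obtain ⟨F, hFext, hFq'⟩ := hconvOn.exists_ge_of_mem_convexHull (Set.subset_univ _) hq'ch
  -- key real inequality
  have hkey : (lP h - lE h) / nrm h ≤ (ip F h - ip E h) / nrm h + (ε : ℝ) := by
    rw [div_add' _ _ _ hn.ne']
    rw [div_le_div_iff_of_pos_right hn, ← hEh]
    nlinarith [hlPq, hqq', hFq']
  calc ENNReal.ofReal ((lP h - lE h) / nrm h)
      ≤ ENNReal.ofReal ((ip F h - ip E h) / nrm h + (ε : ℝ)) := ENNReal.ofReal_le_ofReal hkey
    _ ≤ ENNReal.ofReal ((ip F h - ip E h) / nrm h) + ENNReal.ofReal (ε : ℝ) :=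
        ENNReal.ofReal_add_le
    _ ≤ (⨆ F ∈ Set.extremePoints ℝ Mf, dNC M E F) + ε := by
        gcongr
        · refine le_iSup₂_of_le F hFext ?_
          rw [dNC]
          exact le_iSup₂_of_le h ⟨hEmin, hh⟩ le_rfl
        · simp
end
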